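/- Let Q_1, …, Q_N be d×d Hermitian unitary complex matrices such that every pair Q_i, Q_j either commutes or anticommutes, let p_1, …, p_N ∈ [0, 1/2), γ_i = 1/(1 − 2p_i), and let μ ⊆ {1, …, N}. Let ρ and O be d×d complex matrices and suppose Q_i O Q_i = O for every i ∉ μ. For σ ∈ {−1, +1}^N let w(σ) = ∏_{i=1}^{N} w_i(σ_i) with w_i(+1) = 1 − p_i and w_i(−1) = p_i, let C_σ be the composition of the conjugation maps A ↦ Q_i A Q_i over all i with σ_i = −1 (in increasing order of i), and let 𝒩 = N_{Q_N,p_N} ∘ ⋯ ∘ N_{Q_1,p_1} where N_{Q_i,p_i}(A) = (1 − p_i) A + p_i Q_i A Q_i. Then ∑_{σ ∈ {−1,+1}^N} w(σ) · (∏_{i ∈ μ} γ_i σ_i) · Tr(ρ · C_σ(𝒩(O))) = Tr(ρ O). That is, the local PEC estimator, which rescales only by the factors γ_i σ_i for noise channels inside the light cone μ of the observable, is an unbiased estimator of the ideal expectation value. -/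

import Mathlib

open Matrix

namespace LocalPECAux
open Finset

variable {d N : ℕ}

/-- generic: a function commuting with the step commutes with the fold. -/
lemma foldl_comm_of_step {α β : Type*} (f : α → α) (g : α → β → α)
    (h : ∀ a b, f (g a b) = g (f a) b) :
    ∀ (L : List β) (a : α), f (L.foldl g a) = L.foldl g (f a)
  | [], _ => rfl
  | b :: L, a => by
      simp only [List.foldl_cons]
      rw [foldl_comm_of_step f g h L (g a b), h]

lemma conj_conj (Q : Fin N → Matrix (Fin d) (Fin d) ℂ)
    (hQ_comm : ∀ i j, Q i * Q j = Q j * Q i ∨ Q i * Q j = -(Q j * Q i))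
    (a i : Fin N) (A : Matrix (Fin d) (Fin d) ℂ) :
    Q a * (Q i * A * Q i) * Q a = Q i * (Q a * A * Q a) * Q i := by
  have h1 : Q a * (Q i * A * Q i) * Q a = (Q a * Q i) * A * (Q i * Q a) := by
    noncomm_ring
  have h2 : Q i * (Q a * A * Q a) * Q i = (Q i * Q a) * A * (Q a * Q i) := by
    noncomm_ring
  rcases hQ_comm a i with h | h
  · rw [h1, h2, h]
  · rw [h1, h2, h]
    simp [neg_mul, mul_neg]

/-- conjugation commutes with a channel step. -/
lemma conj_chanStep (Q : Fin N → Matrix (Fin d) (Fin d) ℂ)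
    (hQ_comm : ∀ i j, Q i * Q j = Q j * Q i ∨ Q i * Q j = -(Q j * Q i))
    (p : Fin N → ℝ) (a : Fin N) (A : Matrix (Fin d) (Fin d) ℂ) (i : Fin N) :
    Q a * ((1 - (p i : ℂ)) • A + (p i : ℂ) • (Q i * A * Q i)) * Q a
      = (1 - (p i : ℂ)) • (Q a * A * Q a)
        + (p i : ℂ) • (Q i * (Q a * A * Q a) * Q i) := by
  rw [Matrix.mul_add, Matrix.add_mul, Matrix.mul_smul, Matrix.smul_mul,
    Matrix.mul_smul, Matrix.smul_mul, conj_conj Q hQ_comm]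

lemma conj_chanFold (Q : Fin N → Matrix (Fin d) (Fin d) ℂ)
    (hQ_comm : ∀ i j, Q i * Q j = Q j * Q i ∨ Q i * Q j = -(Q j * Q i))
    (p : Fin N → ℝ) (a : Fin N) (L : List (Fin N)) (A : Matrix (Fin d) (Fin d) ℂ) :
    Q a * (L.foldl (fun A i => (1 - (p i : ℂ)) • A + (p i : ℂ) • (Q i * A * Q i)) A) * Q a
      = L.foldl (fun A i => (1 - (p i : ℂ)) • A + (p i : ℂ) • (Q i * A * Q i))
          (Q a * A * Q a) := by
  exact foldl_comm_of_step (fun X => Q a * X * Q a) _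
    (fun A i => conj_chanStep Q hQ_comm p a A i) L A

lemma conj_condFold (Q : Fin N → Matrix (Fin d) (Fin d) ℂ)
    (hQ_comm : ∀ i j, Q i * Q j = Q j * Q i ∨ Q i * Q j = -(Q j * Q i))
    (S : Finset (Fin N)) (a : Fin N) (L : List (Fin N)) (A : Matrix (Fin d) (Fin d) ℂ) :
    Q a * (L.foldl (fun A i => if i ∈ S then Q i * A * Q i else A) A) * Q a
      = L.foldl (fun A i => if i ∈ S then Q i * A * Q i else A) (Q a * A * Q a) := by
  refine foldl_comm_of_step (fun X => Q a * X * Q a) _ (fun A i => ?_) L A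
  by_cases h : i ∈ S
  · simp only [h, if_true]; exact conj_conj Q hQ_comm a i A
  · simp only [h, if_false]

lemma condFold_linear (Q : Fin N → Matrix (Fin d) (Fin d) ℂ)
    (S : Finset (Fin N)) (x y : ℂ) :
    ∀ (L : List (Fin N)) (A B : Matrix (Fin d) (Fin d) ℂ),
    L.foldl (fun A i => if i ∈ S then Q i * A * Q i else A) (x • A + y • B)
      = x • L.foldl (fun A i => if i ∈ S then Q i * A * Q i else A) A
        + y • L.foldl (fun A i => if i ∈ S then Q i * A * Q i else A) B
  | [], A, B => rfl
  | b :: L, A, B => by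
      simp only [List.foldl_cons]
      rw [show (if b ∈ S then Q b * (x • A + y • B) * Q b else (x • A + y • B))
            = x • (if b ∈ S then Q b * A * Q b else A)
              + y • (if b ∈ S then Q b * B * Q b else B) by
        by_cases h : b ∈ S <;>
          simp [h, Matrix.mul_add, Matrix.add_mul, Matrix.mul_smul, Matrix.smul_mul]]
      exact condFold_linear Q S x y L _ _

lemma condFold_congr (Q : Fin N → Matrix (Fin d) (Fin d) ℂ)
    (S S' : Finset (Fin N)) :
    ∀ (L : List (Fin N)), (∀ i ∈ L, (i ∈ S ↔ i ∈ S')) → ∀ (A : Matrix (Fin d) (Fin d) ℂ),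
    L.foldl (fun A i => if i ∈ S then Q i * A * Q i else A) A
      = L.foldl (fun A i => if i ∈ S' then Q i * A * Q i else A) A
  | [], _, A => rfl
  | b :: L, h, A => by
      simp only [List.foldl_cons]
      have hb : (b ∈ S) ↔ (b ∈ S') := h b (by simp)
      rw [show (if b ∈ S then Q b * A * Q b else A)
            = (if b ∈ S' then Q b * A * Q b else A) by
        by_cases hbS : b ∈ S
        · rw [if_pos hbS, if_pos (hb.mp hbS)]
        · rw [if_neg hbS, if_neg (fun h' => hbS (hb.mpr h'))]]
      exact condFold_congr Q S S' L (fun i hi => h i (by simp [hi])) _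

lemma base_scalar (N : ℕ) (p γ : Fin N → ℝ)
    (hp : ∀ i, p i ∈ Set.Ico (0 : ℝ) (1 / 2))
    (hγ : ∀ i, γ i = 1 / (1 - 2 * p i)) (μ : Finset (Fin N)) :
    ∑ S ∈ (Finset.univ : Finset (Fin N)).powerset,
      (∏ i, if i ∈ S then p i else 1 - p i) *
        (∏ i ∈ μ, γ i * (if i ∈ S then -1 else 1)) = 1 := by
  have key : ∀ S ∈ (Finset.univ : Finset (Fin N)).powerset,
      (∏ i, if i ∈ S then p i else 1 - p i) *
        (∏ i ∈ μ, γ i * (if i ∈ S then -1 else 1))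
      = (∏ i ∈ S, (if i ∈ μ then p i * (γ i * (-1)) else p i)) *
        ∏ i ∈ Finset.univ \ S, (if i ∈ μ then (1 - p i) * (γ i * 1) else 1 - p i) := by
    intro S _
    have hμprod : (∏ i ∈ μ, γ i * (if i ∈ S then -1 else 1))
        = ∏ i, (if i ∈ μ then γ i * (if i ∈ S then -1 else 1) else 1) := by
      rw [Finset.prod_ite_mem Finset.univ μ
        (fun i => γ i * (if i ∈ S then -1 else 1)), Finset.univ_inter]
    rw [hμprod, ← Finset.prod_mul_distrib]
    have hu : (Finset.univ : Finset (Fin N)) = S ∪ (Finset.univ \ S) :=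
      (Finset.union_sdiff_of_subset (Finset.subset_univ S)).symm
    conv_lhs => rw [hu]
    rw [Finset.prod_union Finset.disjoint_sdiff]
    congr 1
    · exact Finset.prod_congr rfl (fun i hi => by simp [hi, mul_ite, mul_comm])
    · refine Finset.prod_congr rfl (fun i hi => ?_)
      have : i ∉ S := (Finset.mem_sdiff.mp hi).2
      simp [this, mul_ite, mul_comm]
  rw [Finset.sum_congr rfl key, ← Finset.prod_add]
  refine Finset.prod_eq_one (fun i _ => ?_)
  have h2 : 1 - 2 * p i ≠ 0 := by
    have := (hp i).2; intro h; linarith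
  by_cases hiμ : i ∈ μ
  · simp only [hiμ, if_true, hγ i]
    field_simp
    have h2' : 1 - p i * 2 ≠ 0 := by intro h; apply h2; linarith
    calc _ = (1 - p i * 2) * (1 - p i * 2)⁻¹ := by ring
      _ = 1 := mul_inv_cancel₀ h2'
  · simp only [hiμ, if_false]
    ring

lemma main_sum (d N : ℕ) (Q : Fin N → Matrix (Fin d) (Fin d) ℂ)
    (hQ_unit : ∀ i, Q i * Q i = 1)
    (hQ_comm : ∀ i j, Q i * Q j = Q j * Q i ∨ Q i * Q j = -(Q j * Q i))
    (p : Fin N → ℝ) (hp : ∀ i, p i ∈ Set.Ico (0 : ℝ) (1 / 2))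
    (γ : Fin N → ℝ) (hγ : ∀ i, γ i = 1 / (1 - 2 * p i))
    (μ : Finset (Fin N)) (O : Matrix (Fin d) (Fin d) ℂ)
    (hμ : ∀ i ∉ μ, Q i * O * Q i = O)
    (L : List (Fin N)) (hL : L.Nodup) :
    ∑ S ∈ (Finset.univ : Finset (Fin N)).powerset,
      ((∏ i, if i ∈ S then p i else 1 - p i : ℝ) : ℂ) •
      ((∏ i ∈ μ, γ i * (if i ∈ S then -1 else 1) : ℝ) : ℂ) •
      (L.foldl (fun A i => if i ∈ S then Q i * A * Q i else A)
        (L.foldl (fun A i => (1 - (p i : ℂ)) • A + (p i : ℂ) • (Q i * A * Q i)) O)) = O := by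
  induction L using List.reverseRecOn with
  | nil =>
      simp only [List.foldl_nil]
      have comb : ∀ S ∈ (Finset.univ : Finset (Fin N)).powerset,
          ((∏ i, if i ∈ S then p i else 1 - p i : ℝ) : ℂ) •
            ((∏ i ∈ μ, γ i * (if i ∈ S then -1 else 1) : ℝ) : ℂ) • O
          = (((∏ i, if i ∈ S then p i else 1 - p i) *
              (∏ i ∈ μ, γ i * (if i ∈ S then -1 else 1)) : ℝ) : ℂ) • O := by
        intro S _
        rw [smul_smul, ← Complex.ofReal_mul]
      rw [Finset.sum_congr rfl comb, ← Finset.sum_smul, ← Complex.ofReal_sum,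
        base_scalar N p γ hp hγ μ]
      simp
  | append_singleton L a ih =>
      have hLn : L.Nodup := by
        simp only [List.nodup_append] at hL; exact hL.1
      have ha : a ∉ L := by
        simp only [List.nodup_append, List.disjoint_singleton] at hL
        exact fun h => hL.2.2 a h a (List.mem_singleton_self a) rfl
      simp only [List.foldl_append, List.foldl_cons, List.foldl_nil]
      have hsplit : ∀ (F : Finset (Fin N) → Matrix (Fin d) (Fin d) ℂ),
          ∑ S ∈ (Finset.univ : Finset (Fin N)).powerset, F S
          = ∑ T ∈ ((Finset.univ : Finset (Fin N)).erase a).powerset, F T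
            + ∑ T ∈ ((Finset.univ : Finset (Fin N)).erase a).powerset, F (insert a T) := by
        intro F
        conv_lhs => rw [← Finset.insert_erase (Finset.mem_univ a)]
        exact Finset.sum_powerset_insert (Finset.notMem_erase a _) _
      rw [hsplit]
      conv_rhs => rw [← ih hLn, hsplit]
      rw [← Finset.sum_add_distrib, ← Finset.sum_add_distrib]
      refine Finset.sum_congr rfl (fun T hT => ?_)
      have haT : a ∉ T := fun h =>
        (Finset.notMem_erase a _) ((Finset.mem_powerset.mp hT) h)
      -- abbreviations
      set Y : Matrix (Fin d) (Fin d) ℂ :=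
        List.foldl (fun A i => (1 - (p i : ℂ)) • A + (p i : ℂ) • (Q i * A * Q i)) O L with hY
      set X : Matrix (Fin d) (Fin d) ℂ :=
        List.foldl (fun A i => if i ∈ T then Q i * A * Q i else A) Y L with hX
      have hmemiff : ∀ i ∈ L, (i ∈ insert a T ↔ i ∈ T) := by
        intro i hi
        have : i ≠ a := fun h => ha (h ▸ hi)
        simp [Finset.mem_insert, this]
      -- reduce the outer conditional steps
      rw [if_neg haT, if_pos (Finset.mem_insert_self a T)]
      -- replace folds over `insert a T` by folds over `T`
      rw [condFold_congr Q (insert a T) T L hmemiff,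
        condFold_congr Q (insert a T) T L hmemiff]
      -- expand the last channel step through the conditional fold
      have hlin : List.foldl (fun A i => if i ∈ T then Q i * A * Q i else A)
            ((1 - (p a : ℂ)) • Y + (p a : ℂ) • (Q a * Y * Q a)) L
          = (1 - (p a : ℂ)) • X + (p a : ℂ) • (Q a * X * Q a) := by
        rw [condFold_linear, ← conj_condFold Q hQ_comm T a L Y, ← hX]
      rw [hlin]
      have hQaa : Q a * (Q a * X * Q a) * Q a = X := by
        rw [show Q a * (Q a * X * Q a) * Q a = (Q a * Q a) * X * (Q a * Q a) by
          noncomm_ring, hQ_unit a, one_mul, mul_one]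
      have hconj : Q a * ((1 - (p a : ℂ)) • X + (p a : ℂ) • (Q a * X * Q a)) * Q a
          = (1 - (p a : ℂ)) • (Q a * X * Q a) + (p a : ℂ) • X := by
        rw [Matrix.mul_add, Matrix.add_mul, Matrix.mul_smul, Matrix.smul_mul,
          Matrix.mul_smul, Matrix.smul_mul, hQaa]
      rw [hconj]
      -- weight identities
      set W : ℝ := ∏ i ∈ (Finset.univ : Finset (Fin N)).erase a,
        (if i ∈ T then p i else 1 - p i) with hW
      have hw1 : (∏ i, if i ∈ T then p i else 1 - p i) = (1 - p a) * W := by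
        rw [← Finset.mul_prod_erase Finset.univ _ (Finset.mem_univ a), if_neg haT]
      have hw2 : (∏ i, if i ∈ insert a T then p i else 1 - p i) = p a * W := by
        rw [← Finset.mul_prod_erase Finset.univ _ (Finset.mem_univ a),
          if_pos (Finset.mem_insert_self a T)]
        congr 1
        refine Finset.prod_congr rfl (fun i hi => ?_)
        have : i ≠ a := (Finset.mem_erase.mp hi).1
        simp [Finset.mem_insert, this]
      rw [hw1, hw2]
      by_cases haμ : a ∈ μ
      · -- inside the light cone
        set Pi : ℝ := ∏ i ∈ μ.erase a, γ i * (if i ∈ T then -1 else 1) with hPi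
        have hπ1 : (∏ i ∈ μ, γ i * (if i ∈ T then -1 else 1)) = (γ a * 1) * Pi := by
          rw [← Finset.mul_prod_erase μ _ haμ, if_neg haT]
        have hπ2 : (∏ i ∈ μ, γ i * (if i ∈ insert a T then -1 else 1))
            = (γ a * (-1)) * Pi := by
          rw [← Finset.mul_prod_erase μ _ haμ,
            if_pos (Finset.mem_insert_self a T)]
          congr 1
          refine Finset.prod_congr rfl (fun i hi => ?_)
          have : i ≠ a := (Finset.mem_erase.mp hi).1
          simp [Finset.mem_insert, this]
        rw [hπ1, hπ2]
        match_scalars <;> push_cast <;> ring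
      · -- outside the light cone : the conjugation fixes X
        have hfix : Q a * X * Q a = X := by
          rw [hX, conj_condFold Q hQ_comm T a L Y, hY,
            conj_chanFold Q hQ_comm p a L O, hμ a haμ]
        have hπ : (∏ i ∈ μ, γ i * (if i ∈ insert a T then -1 else 1))
            = ∏ i ∈ μ, γ i * (if i ∈ T then -1 else 1) := by
          refine Finset.prod_congr rfl (fun i hi => ?_)
          have : i ≠ a := fun h => haμ (h ▸ hi)
          simp [Finset.mem_insert, this]
        rw [hπ, hfix]
        match_scalars <;> push_cast <;> ring


end LocalPECAux


/-- **The local (light-cone) PEC estimator is unbiased.**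
Let `Q 1, …, Q N` be Hermitian unitary `d×d` complex matrices which pairwise commute
or anticommute, `p i ∈ [0, 1/2)`, `γ i = 1/(1 − 2 p i)`, `μ ⊆ {1, …, N}`, and `ρ, O`
`d×d` complex matrices with `Q i O Q i = O` for every `i ∉ μ` (channels outside the
light cone act trivially on `O`).  For `σ ∈ {−1, +1}^N` let `w σ = ∏ i, w_i (σ i)`
with `w_i (+1) = 1 − p i` and `w_i (−1) = p i`, let `C_σ` compose the conjugations
`A ↦ Q i A Q i` over the `i` with `σ i = −1` (in increasing `i`), and let
`𝒩 = N_{Q N, p N} ∘ ⋯ ∘ N_{Q 1, p 1}`.  Then the local PEC estimator, rescaling only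
by the factors inside the light cone, is unbiased:
`∑_σ w σ (∏_{i ∈ μ} γ i σ i) Tr(ρ C_σ(𝒩 O)) = Tr(ρ O)`. -/
theorem local_pec_estimator_unbiased (d N : ℕ)
    (Q : Fin N → Matrix (Fin d) (Fin d) ℂ)
    (hQ_herm : ∀ i, (Q i)ᴴ = Q i) (hQ_unit : ∀ i, Q i * Q i = 1)
    (hQ_comm : ∀ i j, Q i * Q j = Q j * Q i ∨ Q i * Q j = -(Q j * Q i))
    (p : Fin N → ℝ) (hp : ∀ i, p i ∈ Set.Ico (0 : ℝ) (1 / 2))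
    (γ : Fin N → ℝ) (hγ : ∀ i, γ i = 1 / (1 - 2 * p i))
    (μ : Finset (Fin N))
    (ρ O : Matrix (Fin d) (Fin d) ℂ)
    (hμ : ∀ i ∉ μ, Q i * O * Q i = O) :
    ∑ σ ∈ Fintype.piFinset (fun _ : Fin N => ({-1, 1} : Finset ℝ)),
      ((∏ i, if σ i = 1 then 1 - p i else p i : ℝ) : ℂ) *
      ((∏ i ∈ μ, γ i * σ i : ℝ) : ℂ) *
      (ρ * (List.finRange N).foldl
          (fun A i => if σ i = -1 then Q i * A * Q i else A)
          ((List.finRange N).foldl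
            (fun A i => (1 - (p i : ℂ)) • A + (p i : ℂ) • (Q i * A * Q i)) O)).trace
      = (ρ * O).trace := by
  classical
  have key := LocalPECAux.main_sum d N Q hQ_unit hQ_comm p hp γ hγ μ O hμ
    (List.finRange N) (List.nodup_finRange N)
  conv_rhs => rw [← key]
  rw [Finset.mul_sum, Matrix.trace_sum]
  refine Finset.sum_bij'
    (fun σ _ => Finset.univ.filter (fun j => σ j = -1))
    (fun S _ => fun j => if j ∈ S then (-1 : ℝ) else 1)
    (fun σ _ => Finset.mem_powerset.mpr (Finset.subset_univ _))
    (fun S _ => by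
      simp only [Fintype.mem_piFinset, Finset.mem_insert, Finset.mem_singleton]
      intro j
      by_cases h : j ∈ S <;> simp [h])
    (fun σ hσ => by
      funext j
      by_cases h : σ j = -1
      · simp [Finset.mem_filter, h]
      · have h1 : σ j = 1 := by
          rcases (by simpa using Fintype.mem_piFinset.mp hσ j :
            σ j = -1 ∨ σ j = 1) with h' | h'
          · exact absurd h' h
          · exact h'
        have h2 : j ∉ Finset.univ.filter (fun j => σ j = -1) := by simp [h]
        simp [h2, h1])
    (fun S _ => by
      ext j
      by_cases h : j ∈ S
      · simp [Finset.mem_filter, h]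
      · simp only [Finset.mem_filter, Finset.mem_univ, true_and, h, if_neg,
          if_false, iff_false]
        norm_num)
    (fun σ hσ => ?_)
  -- remaining: term equality
  set S := Finset.univ.filter (fun j => σ j = -1) with hS
  have hmem : ∀ j, σ j = -1 ∨ σ j = 1 := fun j => by
    simpa using Fintype.mem_piFinset.mp hσ j
  have hSmem : ∀ j, j ∈ S ↔ σ j = -1 := by
    intro j; simp [hS, Finset.mem_filter]
  have hw : (∏ i, if σ i = 1 then 1 - p i else p i : ℝ)
      = (∏ i, if i ∈ S then p i else 1 - p i : ℝ) := by
    refine Finset.prod_congr rfl (fun i _ => ?_)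
    rcases hmem i with h | h
    · have h1 : ¬ (σ i = 1) := by rw [h]; norm_num
      rw [if_neg h1, if_pos ((hSmem i).mpr h)]
    · have h1 : ¬ (σ i = -1) := by rw [h]; norm_num
      rw [if_pos h, if_neg (fun hm => h1 ((hSmem i).mp hm))]
  have hπ : (∏ i ∈ μ, γ i * σ i : ℝ)
      = (∏ i ∈ μ, γ i * (if i ∈ S then -1 else 1) : ℝ) := by
    refine Finset.prod_congr rfl (fun i _ => ?_)
    rcases hmem i with h | h
    · rw [h, if_pos ((hSmem i).mpr h)]
    · have h1 : ¬ (σ i = -1) := by rw [h]; norm_num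
      rw [h, if_neg (fun hm => h1 ((hSmem i).mp hm))]
  have hfun : (fun (A : Matrix (Fin d) (Fin d) ℂ) (i : Fin N) =>
        if σ i = -1 then Q i * A * Q i else A)
      = (fun A i => if i ∈ S then Q i * A * Q i else A) := by
    funext A i
    by_cases h : σ i = -1
    · rw [if_pos h, if_pos ((hSmem i).mpr h)]
    · rw [if_neg h, if_neg (fun hm => h ((hSmem i).mp hm))]
  rw [hw, hπ, hfun, mul_smul_comm, mul_smul_comm, Matrix.trace_smul,
    Matrix.trace_smul, smul_eq_mul, smul_eq_mul, mul_assoc]
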